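/- Let x be a sequence of length m with distinct elements, i ∈ {1,...,m-1} with x[i] > x[i+1], and y = τ(x,i). Then SN_y[i] = SN_x[i] + SN_x[i+1] - 1 and SN_y[i+1] = 0. -/

import Mathlib

/-- Binary tree shapes (Cartesian trees are determined by their shape). -/
inductive BTree : Type
  | nil : BTree
  | node : BTree → BTree → BTree
deriving DecidableEq

namespace BTree

/-- Number of nodes. -/
def size : BTree → ℕ
  | nil => 0
  | node l r => size l + size r + 1

/-- Length of the leftmost path. -/
def LMP : BTree → ℕ
  | nil => 0
  | node l _ => LMP l + 1

/-- Length of the rightmost path. -/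
def RMP : BTree → ℕ
  | nil => 0
  | node _ r => RMP r + 1

end BTree

/-- Minimum value of a list (0 for the empty list). -/
def listMin : List ℤ → ℤ
  | [] => 0
  | a :: t => t.foldl min a

/-- Index (0-based) of the minimum of a list. -/
def minIdx (l : List ℤ) : ℕ := l.idxOf (listMin l)

/-- Cartesian tree of a list, with fuel for termination. -/
def ctreeAux : ℕ → List ℤ → BTree
  | 0, _ => .nil
  | _ + 1, [] => .nil
  | n + 1, a :: t =>
      let g := minIdx (a :: t)
      .node (ctreeAux n ((a :: t).take g)) (ctreeAux n ((a :: t).drop (g + 1)))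

/-- Cartesian tree of a list: the root is the position of the minimum,
its subtrees are the Cartesian trees of the prefix and suffix around it. -/
def ctreeL (l : List ℤ) : BTree := ctreeAux l.length l

/-- The factor x[a..b] (1-based positions) of a sequence, as a list. -/
def seqList (x : ℕ → ℤ) (a b : ℕ) : List ℤ :=
  (List.range (b + 1 - a)).map (fun k => x (a + k))

/-- Cartesian tree of the sequence x[1..m]. -/
def ctreeOf (m : ℕ) (x : ℕ → ℤ) : BTree := ctreeL (seqList x 1 m)

/-- Positions j < h (1-based) with x[j] < x[h]. -/
def PDset (x : ℕ → ℤ) (h : ℕ) : Finset ℕ :=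
  (Finset.Ico 1 h).filter (fun j => x j < x h)

/-- Parent-distance table: PD_x[h] = h - max{j < h : x[j] < x[h]}, 0 if no such j. -/
def PD (x : ℕ → ℤ) (h : ℕ) : ℕ :=
  if hs : (PDset x h).Nonempty then h - (PDset x h).max' hs else 0

/-- Positions h < j ≤ m with x[j] < x[h]. -/
def RPDset (m : ℕ) (x : ℕ → ℤ) (h : ℕ) : Finset ℕ :=
  (Finset.Ioc h m).filter (fun j => x j < x h)

/-- Reverse parent-distance table: RPD_x[h] = min{j > h : x[j] < x[h]} - h, 0 if no such j. -/
def RPD (m : ℕ) (x : ℕ → ℤ) (h : ℕ) : ℕ :=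
  if hs : (RPDset m x h).Nonempty then (RPDset m x h).min' hs - h else 0

/-- Referent of h: the smallest position j > h with x[j] < x[h], or -1 if none. -/
def refD (m : ℕ) (x : ℕ → ℤ) (h : ℕ) : ℤ :=
  if hs : (RPDset m x h).Nonempty then ((RPDset m x h).min' hs : ℤ) else -1

/-- Skipped-number table: SN_x[h] is the number of nodes on the rightmost path of the
left subtree of node h in C(x), i.e. the number of positions whose referent is h. -/
def SN (m : ℕ) (x : ℕ → ℤ) (h : ℕ) : ℕ :=
  ((Finset.Ico 1 h).filter (fun j => refD m x j = (h : ℤ))).card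

/-- The swap τ(x,i): exchange the entries at positions i and i+1. -/
def swapAt (x : ℕ → ℤ) (i : ℕ) : ℕ → ℤ :=
  fun j => if j = i then x (i + 1) else if j = i + 1 then x i else x j

/-- ng(T,i): the Cartesian trees obtained from a sequence realizing T by one swap
at position i (valid positions are 1 ≤ i ≤ m-1). -/
def ngi (m : ℕ) (T : BTree) (i : ℕ) : Set BTree :=
  { S | 1 ≤ i ∧ i + 1 ≤ m ∧ ∃ x : ℕ → ℤ, Set.InjOn x (Set.Icc 1 m) ∧
        ctreeOf m x = T ∧ S = ctreeOf m (swapAt x i) }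

/-- ng(T): the swap neighbourhood of T. -/
def ng (m : ℕ) (T : BTree) : Set BTree := ⋃ i, ngi m T i

/-- Number of permutations of {1,...,n} whose Cartesian tree is A. -/
noncomputable def permCount (n : ℕ) (A : BTree) : ℕ :=
  Set.ncard { σ : Equiv.Perm (Fin n) |
    ctreeL (List.ofFn (fun k : Fin n => ((σ k : ℕ) : ℤ) + 1)) = A }

/-- Product over all nodes t of A of the size of the subtree rooted at t. -/
def hookProd : BTree → ℕ
  | .nil => 1
  | .node l r => (BTree.node l r).size * hookProd l * hookProd r



lemma mem_RPDset {m : ℕ} {x : ℕ → ℤ} {h k : ℕ} :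
    k ∈ RPDset m x h ↔ (h < k ∧ k ≤ m) ∧ x k < x h := by
  simp [RPDset, Finset.mem_filter, Finset.mem_Ioc]

lemma refD_eq_coe {m : ℕ} {x : ℕ → ℤ} {h c : ℕ} :
    refD m x h = (c : ℤ) ↔ c ∈ RPDset m x h ∧ ∀ k ∈ RPDset m x h, c ≤ k := by
  unfold refD
  split_ifs with hs
  · constructor
    · intro he
      have hm : (RPDset m x h).min' hs = c := by exact_mod_cast he
      exact ⟨hm ▸ (RPDset m x h).min'_mem hs, fun k hk => hm ▸ (RPDset m x h).min'_le k hk⟩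
    · rintro ⟨h1, h2⟩
      have hm : (RPDset m x h).min' hs = c :=
        le_antisymm ((RPDset m x h).min'_le c h1) ((RPDset m x h).le_min' hs c h2)
      exact_mod_cast congrArg (Nat.cast : ℕ → ℤ) hm
  · constructor
    · intro he
      exact he.elim
    · rintro ⟨h1, _⟩; exact absurd ⟨c, h1⟩ hs

theorem stmt18 (m i : ℕ) (x : ℕ → ℤ) (hx : Set.InjOn x (Set.Icc 1 m))
    (hi1 : 1 ≤ i) (him : i + 1 ≤ m) (hgt : x (i + 1) < x i) :
    SN m (swapAt x i) i = SN m x i + SN m x (i + 1) - 1 ∧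
    SN m (swapAt x i) (i + 1) = 0 := by
  set y := swapAt x i with hy
  have hyi : y i = x (i + 1) := by simp [hy, swapAt]
  have hyi1 : y (i + 1) = x i := by simp [hy, swapAt]
  have hyo : ∀ j, j ≠ i → j ≠ i + 1 → y j = x j := by
    intro j h1 h2; simp [hy, swapAt, h1, h2]
  -- refD x i = i+1
  have hrefxi : refD m x i = ((i + 1 : ℕ) : ℤ) := by
    rw [refD_eq_coe]
    refine ⟨mem_RPDset.2 ⟨⟨by omega, him⟩, hgt⟩, ?_⟩
    intro k hk
    have := (mem_RPDset.1 hk).1.1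
    omega
  -- second part
  have h2 : SN m y (i + 1) = 0 := by
    unfold SN
    rw [Finset.card_eq_zero, Finset.filter_eq_empty_iff]
    intro j hj hre
    rw [Finset.mem_Ico] at hj
    rw [refD_eq_coe] at hre
    obtain ⟨hmem, hmin⟩ := hre
    rw [mem_RPDset] at hmem
    by_cases hji : j = i
    · subst hji
      rw [hyi, hyi1] at hmem
      exact absurd hmem.2 (not_lt.2 hgt.le)
    · have hji' : j < i := by omega
      have hiRP : i ∈ RPDset m y j := by
        rw [mem_RPDset]
        refine ⟨⟨hji', by omega⟩, ?_⟩
        rw [hyi]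
        have : y (i + 1) < y j := hmem.2
        rw [hyi1] at this
        exact lt_trans hgt this
      have := hmin i hiRP
      omega
  -- key equivalence for j < i
  have key : ∀ j ∈ Finset.Ico 1 i,
      (refD m y j = (i : ℤ) ↔ (refD m x j = (i : ℤ) ∨ refD m x j = ((i + 1 : ℕ) : ℤ))) := by
    intro j hj
    rw [Finset.mem_Ico] at hj
    have hyj : y j = x j := hyo j (by omega) (by omega)
    have hsmall : ∀ k, j < k → k < i → (k ∈ RPDset m x j ↔ k ∈ RPDset m y j) := by
      intro k hk1 hk2
      rw [mem_RPDset, mem_RPDset, hyj, hyo k (by omega) (by omega)]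
    constructor
    · intro hre
      rw [refD_eq_coe] at hre
      obtain ⟨hmem, hmin⟩ := hre
      rw [mem_RPDset, hyi, hyj] at hmem
      have hub : ∀ k ∈ RPDset m x j, i ≤ k := by
        intro k hk
        by_contra hlt
        push_neg at hlt
        have hk1 : j < k := (mem_RPDset.1 hk).1.1
        have := hmin k ((hsmall k hk1 hlt).1 hk)
        omega
      by_cases hxi : x i < x j
      · left
        rw [refD_eq_coe]
        exact ⟨mem_RPDset.2 ⟨⟨hj.2, by omega⟩, hxi⟩, hub⟩
      · right
        rw [refD_eq_coe]
        refine ⟨mem_RPDset.2 ⟨⟨by omega, him⟩, hmem.2⟩, ?_⟩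
        intro k hk
        have h1 := hub k hk
        have : k ≠ i := by
          intro h; subst h; exact hxi (mem_RPDset.1 hk).2
        omega
    · intro hre
      rw [refD_eq_coe]
      rcases hre with hre | hre <;> rw [refD_eq_coe] at hre <;>
        obtain ⟨hmem, hmin⟩ := hre <;> rw [mem_RPDset] at hmem
      · refine ⟨mem_RPDset.2 ⟨⟨hj.2, by omega⟩, ?_⟩, ?_⟩
        · rw [hyi, hyj]; exact lt_trans hgt hmem.2
        · intro k hk
          by_contra hlt
          push_neg at hlt
          have hk1 : j < k := (mem_RPDset.1 hk).1.1
          have := hmin k ((hsmall k hk1 hlt).2 hk)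
          omega
      · refine ⟨mem_RPDset.2 ⟨⟨hj.2, by omega⟩, ?_⟩, ?_⟩
        · rw [hyi, hyj]; exact hmem.2
        · intro k hk
          by_contra hlt
          push_neg at hlt
          have hk1 : j < k := (mem_RPDset.1 hk).1.1
          have := hmin k ((hsmall k hk1 hlt).2 hk)
          omega
  -- first part
  have hSN1 : SN m x (i + 1) =
      ((Finset.Ico 1 i).filter (fun j => refD m x j = ((i + 1 : ℕ) : ℤ))).card + 1 := by
    unfold SN
    rw [show Finset.Ico 1 (i + 1) = insert i (Finset.Ico 1 i) by
          ext k; simp [Finset.mem_Ico, Finset.mem_insert]; omega,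
        Finset.filter_insert, if_pos hrefxi,
        Finset.card_insert_of_notMem (by simp [Finset.mem_filter])]
  have h1 : SN m y i =
      ((Finset.Ico 1 i).filter (fun j => refD m x j = (i : ℤ))).card +
      ((Finset.Ico 1 i).filter (fun j => refD m x j = ((i + 1 : ℕ) : ℤ))).card := by
    unfold SN
    rw [Finset.filter_congr key, Finset.filter_or]
    refine Finset.card_union_of_disjoint ?_
    rw [Finset.disjoint_left]
    intro a ha hb
    rw [Finset.mem_filter] at ha hb
    have := ha.2.symm.trans hb.2
    omega
  refine ⟨?_, h2⟩
  have : SN m x i = ((Finset.Ico 1 i).filter (fun j => refD m x j = (i : ℤ))).card := rfl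
  omega
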